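/- For n ≥ 3, the number of permutations in Av_n(123) that contain an increasing sub-permutation of size 2 equals a_n = 3·(2n−4)!/((n−3)!·n!), and the number whose largest increasing sub-permutation has size 1 is c_n − a_n, where c_n is the n-th Catalan number. -/

import Mathlib

/-- Rescaling: replace each entry of a duplicate-free list by its rank, giving a
permutation of `{1,...,length}` with the same relative order. -/
def rescale (s : List ℕ) : List ℕ :=
  s.map (fun x => (s.filter (fun y => decide (y ≤ x))).length)

/-- `l` is (the one-line notation of) a permutation of `{1,...,n}`. -/
def IsPermList (n : ℕ) (l : List ℕ) : Prop := l.Perm (List.range' 1 n)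

/-- `l` contains the pattern `σ`: some subsequence of `l` is order-isomorphic
to `σ`. -/
def ContainsPat (σ l : List ℕ) : Prop := ∃ t, t.Sublist l ∧ rescale t = σ

/-- `l` avoids the pattern `σ`. -/
def AvoidsPat (σ l : List ℕ) : Prop := ¬ ContainsPat σ l

/-- `s` is the substring `s_l(k)` of `l` generated by the entry `k`: the longest
contiguous substring of `l` containing `k` all of whose entries are `≥ k`.
The sub-permutation `g_l(k)` generated by `k` is then `rescale s`. -/
def IsGenSub (l : List ℕ) (k : ℕ) (s : List ℕ) : Prop :=
  s <:+: l ∧ k ∈ s ∧ (∀ x ∈ s, k ≤ x) ∧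
    ∀ t : List ℕ, t <:+: l → k ∈ t → (∀ x ∈ t, k ≤ x) → t.length ≤ s.length


open List


/-- No increasing subsequence of length 3. -/
def NoInc3 (l : List ℕ) : Prop := ∀ t ∈ l.sublists, ¬(t.length = 3 ∧ t.Chain' (· < ·))

instance : DecidablePred NoInc3 := fun l => by unfold NoInc3 List.Chain'; infer_instance

def avS (m : ℕ) : Finset (List ℕ) :=
  (List.range' 1 m).permutations.toFinset.filter NoInc3

/-- Length of the longest strictly decreasing prefix. -/
def dpl : List ℕ → ℕ
  | [] => 0
  | [_] => 1
  | a :: b :: t => if b < a then dpl (b :: t) + 1 else 1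

def HF (m j : ℕ) : ℕ := ((avS m).filter (fun l => j ≤ dpl l)).card

lemma mem_avS {m : ℕ} {l : List ℕ} :
    l ∈ avS m ↔ l.Perm (List.range' 1 m) ∧ NoInc3 l := by
  simp [avS, Finset.mem_filter, List.mem_permutations]

lemma noInc3_not (l : List ℕ) (h : NoInc3 l) {a b c : ℕ}
    (hs : [a, b, c].Sublist l) (h1 : a < b) (h2 : b < c) : False :=
  h [a, b, c] (List.mem_sublists.2 hs) ⟨rfl, by simp [List.Chain', List.isChain_cons_cons, h1, h2]⟩

lemma noInc3_of (l : List ℕ)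
    (h : ∀ a b c : ℕ, [a, b, c].Sublist l → a < b → b < c → False) : NoInc3 l := by
  intro t ht ⟨hlen, hch⟩
  match t, hlen with
  | [a, b, c], _ =>
    simp [List.Chain', List.isChain_cons_cons] at hch
    exact h a b c (List.mem_sublists.1 ht) hch.1 hch.2

lemma noInc3_sublist {l l' : List ℕ} (h : NoInc3 l) (hs : l'.Sublist l) : NoInc3 l' :=
  noInc3_of _ fun a b c hsub h1 h2 => noInc3_not l h (hsub.trans hs) h1 h2

lemma filter3_len (a b c x : ℕ) :
    ((List.filter (fun y => decide (y ≤ x)) [a, b, c]).length) =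
      (if a ≤ x then 1 else 0) + ((if b ≤ x then 1 else 0) + (if c ≤ x then 1 else 0)) := by
  simp only [List.filter_cons, List.filter_nil, decide_eq_true_eq]
  split_ifs <;> simp

lemma rescale_eq_123 (t : List ℕ) :
    rescale t = [1, 2, 3] ↔ ∃ a b c, t = [a, b, c] ∧ a < b ∧ b < c := by
  constructor
  · intro h
    have hlen : t.length = 3 := by
      have := congrArg List.length h
      simpa [rescale] using this
    match t, hlen with
    | [a, b, c], _ =>
      simp only [rescale, List.map_cons, List.map_nil, filter3_len, List.cons.injEq,
        and_true] at h
      obtain ⟨h1, h2, h3⟩ := h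
      have hab : a < b := by split_ifs at h1 <;> omega
      have hbc : b < c := by split_ifs at h2 <;> omega
      exact ⟨a, b, c, rfl, hab, hbc⟩
  · rintro ⟨a, b, c, rfl, h1, h2⟩
    simp only [rescale, List.map_cons, List.map_nil, filter3_len]
    have e1 : (if a ≤ a then 1 else 0) + ((if b ≤ a then 1 else 0) + (if c ≤ a then 1 else 0)) = 1 := by
      split_ifs <;> omega
    have e2 : (if a ≤ b then 1 else 0) + ((if b ≤ b then 1 else 0) + (if c ≤ b then 1 else 0)) = 2 := by
      split_ifs <;> omega
    have e3 : (if a ≤ c then 1 else 0) + ((if b ≤ c then 1 else 0) + (if c ≤ c then 1 else 0)) = 3 := by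
      split_ifs <;> omega
    rw [e1, e2, e3]

lemma avoids_iff (l : List ℕ) : AvoidsPat [1, 2, 3] l ↔ NoInc3 l := by
  constructor
  · intro h t ht ⟨hlen, hch⟩
    match t, hlen with
    | [a, b, c], _ =>
      simp [List.Chain', List.isChain_cons_cons] at hch
      exact h ⟨[a, b, c], List.mem_sublists.1 ht,
        (rescale_eq_123 _).2 ⟨a, b, c, rfl, hch.1, hch.2⟩⟩
  · rintro h ⟨t, hsub, hres⟩
    obtain ⟨a, b, c, rfl, h1, h2⟩ := (rescale_eq_123 t).1 hres
    exact h [a, b, c] (List.mem_sublists.2 hsub) ⟨rfl, by simp [List.Chain', List.isChain_cons_cons, h1, h2]⟩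


lemma le_dpl_iff : ∀ (l : List ℕ) (j : ℕ),
    j ≤ dpl l ↔ (l.take j).Chain' (· > ·) ∧ j ≤ l.length
  | [], j => by simp [dpl, List.Chain']
  | [a], j => by
    have h1 : (List.take j [a]).Chain' (· > ·) := by
      cases j with
      | zero => simp [List.Chain']
      | succ j => simp [List.Chain']
    simp [dpl, h1]
  | a :: b :: t, j => by
    match j with
    | 0 => simp [List.Chain']
    | j + 1 =>
      by_cases hba : b < a
      · match j with
        | 0 =>
          rw [dpl, if_pos hba]
          simp only [List.take_succ_cons, List.take_zero, List.length_cons]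
          constructor
          · intro _; exact ⟨by simp [List.Chain'], by omega⟩
          · intro _; omega
        | j + 1 =>
          have ih := le_dpl_iff (b :: t) (j + 1)
          constructor
          · intro h
            have h' : j + 1 ≤ dpl (b :: t) := by rw [dpl, if_pos hba] at h; omega
            obtain ⟨hc, hl⟩ := ih.1 h'
            refine ⟨?_, by simp at hl ⊢; omega⟩
            rw [List.take_succ_cons] at hc
            have e : List.take (j + 1 + 1) (a :: b :: t) = a :: b :: List.take j t := by simp
            rw [e]
            exact List.isChain_cons_cons.2 ⟨hba, hc⟩
          · rintro ⟨hc, hl⟩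
            rw [List.take_succ_cons, List.take_succ_cons] at hc
            rw [dpl, if_pos hba]
            have h2 := ih.2 ⟨by simpa [List.take_succ_cons, List.Chain'] using (List.isChain_cons_cons.1 hc).2,
              by simp at hl ⊢; omega⟩
            omega
      · rw [dpl, if_neg hba]
        match j with
        | 0 =>
          simp only [List.take_succ_cons, List.take_zero, List.length_cons]
          constructor
          · intro _; exact ⟨by simp [List.Chain'], by omega⟩
          · intro _; omega
        | j + 1 =>
          simp only [List.take_succ_cons, List.take_succ_cons, List.length_cons]
          constructor
          · omega
          · rintro ⟨hc, -⟩
            exact absurd (List.isChain_cons_cons.1 hc).1 hba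

lemma dpl_le_length (l : List ℕ) : dpl l ≤ l.length := ((le_dpl_iff l (dpl l)).1 le_rfl).2

lemma one_le_dpl {l : List ℕ} (h : l ≠ []) : 1 ≤ dpl l := by
  cases l with
  | nil => exact absurd rfl h
  | cons a t => exact (le_dpl_iff _ 1).2 ⟨by simp [List.Chain'], by simp⟩

lemma dpl_cons_max {a : ℕ} {l : List ℕ} (h : ∀ x ∈ l, x < a) : dpl (a :: l) = dpl l + 1 := by
  cases l with
  | nil => simp [dpl]
  | cons b t => rw [dpl, if_pos (h b (by simp))]

lemma not_chain'_split {α : Type*} {R : α → α → Prop} :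
    ∀ {l : List α}, ¬ l.Chain' R → ∃ u a b v, l = u ++ a :: b :: v ∧ ¬ R a b
  | [], h => absurd List.isChain_nil h
  | [a], h => absurd (List.isChain_singleton a) h
  | a :: b :: t, h => by
    by_cases hab : R a b
    · have : ¬ (b :: t).Chain' R := fun hc => h (List.isChain_cons_cons.2 ⟨hab, hc⟩)
      obtain ⟨u, x, y, v, he, hr⟩ := not_chain'_split this
      exact ⟨a :: u, x, y, v, by rw [he]; rfl, hr⟩
    · exact ⟨[], a, b, t, rfl, hab⟩

lemma sublist_remove_middle {α : Type*} {t A B : List α} {a : α}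
    (h : t.Sublist (A ++ a :: B)) (ha : a ∉ t) : t.Sublist (A ++ B) := by
  obtain ⟨t₁, t₂, rfl, h1, h2⟩ := List.sublist_append_iff.1 h
  rcases List.sublist_cons_iff.1 h2 with h2' | ⟨r, rfl, hr⟩
  · exact h1.append h2'
  · exact absurd (by simp) ha

lemma perm_range_succ (m : ℕ) : (List.range' 1 (m + 1)).Perm ((m + 1) :: List.range' 1 m) := by
  rw [List.range'_concat]
  have : 1 + 1 * m = m + 1 := by omega
  rw [this]
  have h := List.perm_middle (a := m + 1) (l₁ := List.range' 1 m) (l₂ := ([] : List ℕ))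
  simpa using h

lemma chain'_gt_range'_rev (m : ℕ) : ((List.range' 1 m).reverse).Chain' (· > ·) := by
  unfold List.Chain'
  rw [List.isChain_reverse]
  have : List.Chain' (· < ·) (List.range' 1 m) :=
    List.isChain_iff_pairwise.2 (List.pairwise_lt_range' (s := 1) (n := m))
  exact List.IsChain.imp (fun _ _ h => h) this


lemma length_avS {m : ℕ} {l : List ℕ} (h : l ∈ avS m) : l.length = m := by
  have := (mem_avS.1 h).1.length_eq
  simpa using this

lemma nodup_avS {m : ℕ} {l : List ℕ} (h : l ∈ avS m) : l.Nodup :=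
  ((mem_avS.1 h).1.nodup_iff).2 (List.nodup_range' (s := 1) (n := m))

lemma bound_avS {m : ℕ} {l : List ℕ} (h : l ∈ avS m) {x : ℕ} (hx : x ∈ l) :
    1 ≤ x ∧ x ≤ m := by
  have := (mem_avS.1 h).1.subset hx
  rw [List.mem_range'_1] at this
  omega

lemma noInc3_cons_max {a : ℕ} {l : List ℕ} (hmax : ∀ x ∈ l, x < a) (h : NoInc3 l) :
    NoInc3 (a :: l) := by
  apply noInc3_of
  intro x y z hs hxy hyz
  rcases List.sublist_cons_iff.1 hs with h' | ⟨r, he, hr⟩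
  · exact noInc3_not _ h h' hxy hyz
  · have hx : x = a := by simpa using congrArg List.head? he
    have hr' : r = [y, z] := by simpa using (congrArg List.tail he).symm
    subst hx; subst hr'
    have : y ∈ l := hr.subset (by simp)
    exact absurd hxy (by have := hmax y this; omega)

lemma card_dpl_head_max (m j : ℕ) (hj : 1 ≤ j) :
    ((avS (m+1)).filter (fun l => dpl l = j ∧ l.head? = some (m+1))).card
      = ((avS m).filter (fun l => dpl l = j - 1)).card := by
  apply Finset.card_bij' (i := fun l _ => l.tail) (j := fun σ _ => (m+1) :: σ)
  · intro l hl
    rw [Finset.mem_filter] at hl ⊢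
    obtain ⟨hav, hd, hh⟩ := hl
    obtain ⟨hperm, hno⟩ := mem_avS.1 hav
    have hl' : l = (m+1) :: l.tail := by
      cases l with
      | nil => simp at hh
      | cons a t => simp at hh; simp [hh]
    have hpt : l.tail.Perm (List.range' 1 m) := by
      have h2 : ((m+1) :: l.tail).Perm ((m+1) :: List.range' 1 m) :=
        (hl' ▸ hperm).trans (perm_range_succ m)
      exact h2.cons_inv
    refine ⟨mem_avS.2 ⟨hpt, noInc3_sublist hno (List.tail_sublist l)⟩, ?_⟩
    have hb : ∀ x ∈ l.tail, x < m + 1 := by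
      intro x hx
      have := hpt.subset hx
      rw [List.mem_range'_1] at this
      omega
    have : dpl l = dpl l.tail + 1 := by
      conv_lhs => rw [hl']
      exact dpl_cons_max hb
    omega
  · intro σ hσ
    rw [Finset.mem_filter] at hσ ⊢
    obtain ⟨hav, hd⟩ := hσ
    obtain ⟨hperm, hno⟩ := mem_avS.1 hav
    have hb : ∀ x ∈ σ, x < m + 1 := by
      intro x hx
      have := hperm.subset hx
      rw [List.mem_range'_1] at this
      omega
    refine ⟨mem_avS.2 ⟨(hperm.cons (m+1)).trans (perm_range_succ m).symm,
      noInc3_cons_max hb hno⟩, ?_, by simp⟩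
    rw [dpl_cons_max hb]
    omega
  · intro l hl
    rw [Finset.mem_filter] at hl
    obtain ⟨-, -, hh⟩ := hl
    cases l with
    | nil => simp at hh
    | cons a t => simp at hh; simp [hh]
  · intro σ hσ
    rfl


instance : IsTrans ℕ (· > ·) := ⟨fun _ _ _ h1 h2 => lt_trans h2 h1⟩

lemma max_pos {m j : ℕ} {l : List ℕ} (hl : l ∈ avS (m+1)) (hd : dpl l = j)
    (hh : ¬ l.head? = some (m+1)) (hj : 1 ≤ j) :
    l = l.take j ++ (m+1) :: l.drop (j+1) ∧ j ≤ m := by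
  have hperm := (mem_avS.1 hl).1
  have hno := (mem_avS.1 hl).2
  have hmem : (m+1) ∈ l := hperm.mem_iff.2 (by rw [List.mem_range'_1]; omega)
  obtain ⟨u, v, rfl⟩ := List.append_of_mem hmem
  set l := u ++ (m+1) :: v with hldef
  have hu : u ≠ [] := by rintro rfl; simp [hldef] at hh
  have hnd : l.Nodup := nodup_avS hl
  have hmu : (m+1) ∉ u := by
    intro hx
    rw [List.nodup_append] at hnd
    exact hnd.2.2 _ hx _ (by simp) rfl
  have hbd : ∀ x ∈ l, x ≤ m + 1 := fun x hx => (bound_avS hl hx).2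
  have hcu : u.Chain' (· > ·) := by
    by_contra hc
    obtain ⟨u₁, a, b, v₁, hue, hab⟩ := not_chain'_split hc
    have hndu : u.Nodup := hnd.sublist (List.sublist_append_left u _)
    have hanb : a ≠ b := by
      rw [hue, List.nodup_append] at hndu
      have := (List.nodup_cons.1 hndu.2.1).1
      intro h; exact this (h ▸ List.mem_cons_self)
    have halb : a < b := by
      have : ¬ a > b := hab
      omega
    have hbu : b ∈ u := by rw [hue]; simp
    have hbm : b < m + 1 := by
      have h1 : b ≤ m + 1 := hbd b (by simp [hldef, List.mem_append]; exact Or.inl hbu)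
      have h2 : b ≠ m + 1 := fun h => hmu (h ▸ hbu)
      omega
    have hsub : [a, b].Sublist u := by
      rw [hue]
      exact ((List.Sublist.cons₂ b (List.nil_sublist v₁)).cons₂ a).trans
        (List.sublist_append_right u₁ _)
    have hsub3 : [a, b, m+1].Sublist l :=
      hsub.append ((List.nil_sublist v).cons₂ (m+1))
    exact noInc3_not _ hno hsub3 halb hbm
  have h1 : u.length ≤ dpl l := by
    refine (le_dpl_iff l u.length).2 ⟨?_, by simp [hldef]⟩
    rw [hldef, List.take_left' rfl]
    exact hcu
  have h2 : ¬ (u.length + 1 ≤ dpl l) := by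
    intro hcon
    have hch := ((le_dpl_iff l (u.length + 1)).1 hcon).1
    have he : List.take (u.length + 1) l = u ++ [m+1] := by
      rw [hldef]
      have : u ++ (m+1) :: v = (u ++ [m+1]) ++ v := by simp
      rw [this, List.take_left' (by simp)]
    rw [he] at hch
    have hp := List.isChain_iff_pairwise.1 hch
    rw [List.pairwise_append] at hp
    obtain ⟨x, hx⟩ := List.exists_mem_of_ne_nil u hu
    have : x > m + 1 := hp.2.2 x hx (m+1) (by simp)
    have : x ≤ m + 1 := hbd x (by simp [hldef, List.mem_append]; exact Or.inl hx)
    omega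
  have hdj : j = u.length := by omega
  subst hdj
  have hlen : l.length = m + 1 := length_avS hl
  constructor
  · rw [hldef, List.take_left' rfl]
    have : u ++ (m+1) :: v = (u ++ [m+1]) ++ v := by simp
    rw [this, List.drop_left' (by simp)]
    simp
  · have : l.length = u.length + v.length + 1 := by simp [hldef]; omega
    omega

lemma card_dpl_not_max (m j : ℕ) (hj : 1 ≤ j) :
    ((avS (m+1)).filter (fun l => dpl l = j ∧ ¬ l.head? = some (m+1))).card
      = ((avS m).filter (fun l => j ≤ dpl l)).card := by
  apply Finset.card_bij' (i := fun l _ => l.take j ++ l.drop (j+1))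
    (j := fun σ _ => σ.take j ++ (m+1) :: σ.drop j)
  · -- forward membership
    intro l hl'
    rw [Finset.mem_filter] at hl'
    obtain ⟨hav, hd, hh⟩ := hl'
    obtain ⟨hsplit, hjm⟩ := max_pos hav hd hh hj
    have hperm := (mem_avS.1 hav).1
    have hno := (mem_avS.1 hav).2
    have hlen : l.length = m + 1 := length_avS hav
    have hlA : (l.take j).length = j := by rw [List.length_take]; omega
    have hpm : ((m+1) :: (l.take j ++ l.drop (j+1))).Perm (List.range' 1 (m+1)) := by
      refine (List.perm_middle.symm.trans ?_)
      rw [← hsplit]; exact hperm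
    rw [Finset.mem_filter]
    refine ⟨mem_avS.2 ⟨(hpm.trans (perm_range_succ m)).cons_inv, ?_⟩, ?_⟩
    · refine noInc3_sublist hno ?_
      conv_rhs => rw [hsplit]
      exact List.Sublist.append_left (List.sublist_cons_self _ _) _
    · refine (le_dpl_iff _ j).2 ⟨?_, ?_⟩
      · rw [List.take_left' hlA]
        exact ((le_dpl_iff l j).1 (hd ▸ le_rfl)).1
      · have hld : (l.drop (j+1)).length = m - j := by rw [List.length_drop, hlen]; omega
        rw [List.length_append, hlA, hld]
        omega
  · -- backward membership
    intro σ hσ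
    rw [Finset.mem_filter] at hσ
    obtain ⟨hav, hdσ⟩ := hσ
    have hperm := (mem_avS.1 hav).1
    have hno := (mem_avS.1 hav).2
    have hlen : σ.length = m := length_avS hav
    have hjm : j ≤ m := le_trans hdσ (hlen ▸ dpl_le_length σ)
    have hlA : (σ.take j).length = j := by rw [List.length_take]; omega
    have hchA : (σ.take j).Chain' (· > ·) := ((le_dpl_iff σ j).1 hdσ).1
    have hbσ : ∀ w ∈ σ, w ≤ m := fun w hw => (bound_avS hav hw).2
    have hpm : (σ.take j ++ (m+1) :: σ.drop j).Perm (List.range' 1 (m+1)) := by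
      refine List.perm_middle.trans ?_
      rw [List.take_append_drop]
      exact (hperm.cons (m+1)).trans (perm_range_succ m).symm
    have hnog : NoInc3 (σ.take j ++ (m+1) :: σ.drop j) := by
      apply noInc3_of
      intro x y z hs hxy hyz
      have hbg : ∀ w ∈ σ.take j ++ (m+1) :: σ.drop j, w ≤ m + 1 := by
        intro w hw
        have := hpm.subset hw
        rw [List.mem_range'_1] at this
        omega
      have hmA : (m+1) ∉ σ.take j := fun hc => by
        have := hbσ _ (List.take_subset j σ hc); omega
      have hmB : (m+1) ∉ σ.drop j := fun hc => by
        have := hbσ _ (List.drop_subset j σ hc); omega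
      by_cases hmem : (m+1) ∈ [x, y, z]
      · have hz3 : z ≤ m + 1 := hbg z (hs.subset (by simp))
        have hy3 : y ≤ m + 1 := hbg y (hs.subset (by simp))
        rcases (by simpa using hmem : m + 1 = x ∨ m + 1 = y ∨ m + 1 = z) with h | h | h
        · omega
        · omega
        · subst h
          obtain ⟨t₁, t₂, he, h1, h2⟩ := List.sublist_append_iff.1 hs
          rcases List.sublist_cons_iff.1 h2 with h2' | ⟨r, hr, hr'⟩
          · have : (m+1) ∈ t₁ ++ t₂ := by rw [← he]; simp
            rcases List.mem_append.1 this with h' | h'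
            · exact hmA (h1.subset h')
            · exact hmB (h2'.subset h')
          · subst hr
            match t₁, he with
            | [], he =>
              have hx' : x = m + 1 := by simpa using congrArg List.head? he
              omega
            | [w], he =>
              simp only [List.cons_append, List.nil_append, List.cons.injEq] at he
              obtain ⟨-, hy', -⟩ := he
              omega
            | [w₁, w₂], he =>
              simp only [List.cons_append, List.nil_append, List.cons.injEq] at he
              obtain ⟨hxw, hyw, -⟩ := he
              subst hxw; subst hyw
              have hp2 := List.Pairwise.sublist h1 (List.isChain_iff_pairwise.1 hchA)
              simp only [List.pairwise_cons] at hp2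
              have : x > y := hp2.1 y (by simp)
              omega
            | w₁ :: w₂ :: w₃ :: t', he =>
              have := congrArg List.length he
              simp at this
      · refine noInc3_not _ hno ?_ hxy hyz
        have := sublist_remove_middle hs hmem
        rwa [List.take_append_drop] at this
    rw [Finset.mem_filter]
    refine ⟨mem_avS.2 ⟨hpm, hnog⟩, ?_, ?_⟩
    · have hge : j ≤ dpl (σ.take j ++ (m+1) :: σ.drop j) := by
        refine (le_dpl_iff _ j).2 ⟨?_, by simp [hlA]⟩
        rw [List.take_left' hlA]
        exact hchA
      have hlt : ¬ (j + 1 ≤ dpl (σ.take j ++ (m+1) :: σ.drop j)) := by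
        intro hcon
        have hch := ((le_dpl_iff _ (j+1)).1 hcon).1
        have he : List.take (j+1) (σ.take j ++ (m+1) :: σ.drop j)
            = σ.take j ++ [m+1] := by
          have : σ.take j ++ (m+1) :: σ.drop j = (σ.take j ++ [m+1]) ++ σ.drop j := by simp
          rw [this, List.take_left' (by simp [hlA])]
        rw [he] at hch
        have hp := List.isChain_iff_pairwise.1 hch
        rw [List.pairwise_append] at hp
        have hne : σ.take j ≠ [] := by
          intro hc; rw [hc] at hlA; simp at hlA; omega
        obtain ⟨x, hx⟩ := List.exists_mem_of_ne_nil _ hne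
        have h1 : x > m + 1 := hp.2.2 x hx (m+1) (by simp)
        have h2 : x ≤ m := hbσ x (List.take_subset j σ hx)
        omega
      omega
    · obtain ⟨a, A', hA⟩ := List.exists_cons_of_ne_nil
        (by intro hc; rw [hc] at hlA; simp at hlA; omega : σ.take j ≠ [])
      rw [hA]
      have : a ∈ σ := List.take_subset j σ (hA ▸ (List.mem_cons_self (a := a) (l := A')))
      have := hbσ a this
      simp
      omega
  · -- left inverse : g (i l) = l
    intro l hl'
    rw [Finset.mem_filter] at hl'
    obtain ⟨hav, hd, hh⟩ := hl'
    obtain ⟨hsplit, hjm⟩ := max_pos hav hd hh hj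
    have hlen : l.length = m + 1 := length_avS hav
    have hlA : (l.take j).length = j := by rw [List.length_take]; omega
    rw [List.take_left' hlA, List.drop_left' hlA]
    exact hsplit.symm
  · -- right inverse : i (g σ) = σ
    intro σ hσ
    rw [Finset.mem_filter] at hσ
    obtain ⟨hav, hdσ⟩ := hσ
    have hlen : σ.length = m := length_avS hav
    have hjm : j ≤ m := le_trans hdσ (hlen ▸ dpl_le_length σ)
    have hlA : (σ.take j).length = j := by rw [List.length_take]; omega
    have e2 : List.drop (j+1) (σ.take j ++ (m+1) :: σ.drop j) = σ.drop j := by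
      rw [show σ.take j ++ (m+1) :: σ.drop j = (σ.take j ++ [m+1]) ++ σ.drop j from by simp]
      exact List.drop_left' (by simp [hlA])
    rw [List.take_left' hlA, e2, List.take_append_drop]


lemma HF_split (m j : ℕ) :
    HF m j = HF m (j+1) + ((avS m).filter (fun l => dpl l = j)).card := by
  classical
  have e1 : ((avS m).filter (fun l => j ≤ dpl l)).filter (fun l => j + 1 ≤ dpl l)
      = (avS m).filter (fun l => j + 1 ≤ dpl l) := by
    ext l
    simp only [Finset.mem_filter]
    constructor
    · rintro ⟨⟨ha, -⟩, h2⟩; exact ⟨ha, h2⟩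
    · rintro ⟨ha, h2⟩; exact ⟨⟨ha, by omega⟩, h2⟩
  have e2 : ((avS m).filter (fun l => j ≤ dpl l)).filter (fun l => ¬ (j + 1 ≤ dpl l))
      = (avS m).filter (fun l => dpl l = j) := by
    ext l
    simp only [Finset.mem_filter]
    constructor
    · rintro ⟨⟨ha, h1⟩, h2⟩; exact ⟨ha, by omega⟩
    · rintro ⟨ha, he⟩; exact ⟨⟨ha, by omega⟩, by omega⟩
  unfold HF
  rw [← Finset.card_filter_add_card_filter_not
    (p := fun l => j + 1 ≤ dpl l) (s := (avS m).filter (fun l => j ≤ dpl l)), e1, e2]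

lemma HF_rec (m j : ℕ) (hj : 1 ≤ j) :
    HF (m+1) j = HF (m+1) (j+1) + HF m (j-1) := by
  classical
  rw [HF_split (m+1) j]
  have hsplit2 : ((avS (m+1)).filter (fun l => dpl l = j)).card
      = ((avS (m+1)).filter (fun l => dpl l = j ∧ l.head? = some (m+1))).card
        + ((avS (m+1)).filter (fun l => dpl l = j ∧ ¬ l.head? = some (m+1))).card := by
    rw [← Finset.card_filter_add_card_filter_not
      (p := fun l => l.head? = some (m+1)) (s := (avS (m+1)).filter (fun l => dpl l = j)),
      Finset.filter_filter, Finset.filter_filter]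
  rw [hsplit2, card_dpl_head_max m j hj, card_dpl_not_max m j hj]
  have hj1 : j - 1 + 1 = j := by omega
  rw [HF_split m (j-1), hj1]
  have : ((avS m).filter (fun l => j ≤ dpl l)).card = HF m j := rfl
  rw [this]
  omega

lemma HF_of_lt (m j : ℕ) (h : m < j) : HF m j = 0 := by
  unfold HF
  rw [Finset.card_eq_zero, Finset.filter_eq_empty_iff]
  intro l hl
  have h1 := dpl_le_length l
  have h2 := length_avS hl
  omega

lemma HF_zero_eq (m : ℕ) : HF m 0 = (avS m).card := by
  unfold HF
  rw [Finset.filter_true_of_mem (fun l _ => Nat.zero_le _)]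

lemma HF_zero_one (m : ℕ) (hm : 1 ≤ m) : HF m 0 = HF m 1 := by
  unfold HF
  congr 1
  apply Finset.filter_congr
  intro l hl
  have : l ≠ [] := by
    intro hc
    have := length_avS hl
    rw [hc] at this
    simp at this
    omega
  simp [Nat.zero_le, one_le_dpl this]

lemma HF_self (m : ℕ) (hm : 1 ≤ m) : HF m m = 1 := by
  unfold HF
  rw [Finset.card_eq_one]
  refine ⟨(List.range' 1 m).reverse, ?_⟩
  ext l
  simp only [Finset.mem_filter, Finset.mem_singleton]
  constructor
  · rintro ⟨hl, hd⟩
    have hlen := length_avS hl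
    have hch : l.Chain' (· > ·) := by
      have h := ((le_dpl_iff l m).1 hd).1
      rwa [List.take_of_length_le (le_of_eq hlen)] at h
    have hperm := (mem_avS.1 hl).1
    haveI : Std.Antisymm (α := ℕ) (· > ·) := ⟨fun a b h1 h2 => absurd h2 (by omega)⟩
    refine List.Perm.eq_of_pairwise' (r := (· > ·)) ?_ ?_ (hperm.trans (List.reverse_perm _).symm)
    · exact List.isChain_iff_pairwise.1 hch
    · exact List.isChain_iff_pairwise.1 (chain'_gt_range'_rev m)
  · rintro rfl
    have hch := chain'_gt_range'_rev m
    have hperm : (List.range' 1 m).reverse.Perm (List.range' 1 m) := List.reverse_perm _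
    have hlen : (List.range' 1 m).reverse.length = m := by simp
    refine ⟨mem_avS.2 ⟨hperm, ?_⟩, ?_⟩
    · apply noInc3_of
      intro a b c hs h1 h2
      have hp := List.Pairwise.sublist hs (List.isChain_iff_pairwise.1 hch)
      simp only [List.pairwise_cons] at hp
      have := hp.1 b (by simp)
      omega
    · refine (le_dpl_iff _ m).2 ⟨?_, by simp⟩
      rwa [List.take_of_length_le (le_of_eq hlen)]


lemma HF_closed : ∀ m k j : ℕ, 1 ≤ j → j + k = m →
    HF m j * ((m - j).factorial * (m+1).factorial) = (j+1) * (2*m - j).factorial := by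
  intro m
  induction m with
  | zero => intro k j hj hjk; omega
  | succ m ih =>
    intro k
    induction k with
    | zero =>
      intro j hj hjk
      have hjm : j = m + 1 := by omega
      subst hjm
      rw [HF_self (m+1) (by omega)]
      have e1 : m + 1 - (m + 1) = 0 := by omega
      have e2 : 2 * (m+1) - (m+1) = m + 1 := by omega
      rw [e1, e2]
      simp [Nat.factorial_succ (m+1)]
    | succ k ihk =>
      intro j hj hjk
      have hjm : j + k = m := by omega
      have h1 := HF_rec m j hj
      have h2 := ihk (j+1) (by omega) (by omega)
      have hprev : HF m (j-1) * ((m + 1 - j).factorial * (m+1).factorial)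
          = j * (2*m + 1 - j).factorial := by
        rcases Nat.eq_or_lt_of_le hj with h | h
        · have hj1 : j = 1 := h.symm
          subst hj1
          rw [show (1:ℕ) - 1 = 0 from rfl, HF_zero_one m (by omega)]
          obtain ⟨m', rfl⟩ : ∃ m', m = m' + 1 := ⟨m - 1, by omega⟩
          have hih := ih (m' + 1 - 1) 1 (by omega) (by omega)
          have e1 : m' + 1 - 1 = m' := by omega
          have e2 : 2 * (m' + 1) - 1 = 2 * m' + 1 := by omega
          rw [e1, e2] at hih
          have e3 : m' + 1 + 1 - 1 = m' + 1 := by omega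
          have e4 : 2 * (m' + 1) + 1 - 1 = 2 * m' + 2 := by omega
          rw [e3, e4]
          calc HF (m' + 1) 1 * ((m' + 1).factorial * (m' + 1 + 1).factorial)
              = (m' + 1) * (HF (m' + 1) 1 * (m'.factorial * (m' + 1 + 1).factorial)) := by
                rw [Nat.factorial_succ m']; ring
            _ = (m' + 1) * (2 * (2 * m' + 1).factorial) := by rw [hih]
            _ = 1 * (2 * m' + 2).factorial := by
                rw [show (2 * m' + 2) = (2 * m' + 1) + 1 by omega, Nat.factorial_succ (2 * m' + 1)]
                ring
        · have hih := ih (k+1) (j-1) (by omega) (by omega)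
          have e1 : m - (j-1) = m + 1 - j := by omega
          have e2 : j - 1 + 1 = j := by omega
          have e3 : 2*m - (j-1) = 2*m + 1 - j := by omega
          rw [e1, e2, e3] at hih
          exact hih
      obtain ⟨d, hd⟩ : ∃ d, m = j + d := ⟨m - j, by omega⟩
      have e1 : m + 1 - j = d + 1 := by omega
      have e2 : m + 1 - (j+1) = d := by omega
      have e3 : 2*(m+1) - (j+1) = 2*m + 1 - j := by omega
      have e4 : 2*(m+1) - j = (2*m + 1 - j) + 1 := by omega
      rw [e2, e3] at h2
      rw [e1, e4, h1, Nat.factorial_succ (2*m + 1 - j)]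
      have t1 : HF (m+1) (j+1) * ((d+1).factorial * (m+1+1).factorial)
          = (d+1) * ((j+2) * (2*m + 1 - j).factorial) := by
        rw [Nat.factorial_succ d]
        calc HF (m+1) (j+1) * ((d+1) * d.factorial * (m+1+1).factorial)
            = (d+1) * (HF (m+1) (j+1) * (d.factorial * (m+1+1).factorial)) := by ring
          _ = (d+1) * ((j+2) * (2*m + 1 - j).factorial) := by rw [h2]
      have t2 : HF m (j-1) * ((d+1).factorial * (m+1+1).factorial)
          = (m+2) * (j * (2*m + 1 - j).factorial) := by
        rw [Nat.factorial_succ (m+1)]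
        calc HF m (j-1) * ((d+1).factorial * ((m+1+1) * (m+1).factorial))
            = (m+2) * (HF m (j-1) * ((d+1).factorial * (m+1).factorial)) := by ring
          _ = (m+2) * (j * (2*m + 1 - j).factorial) := by rw [e1] at hprev; rw [hprev]
      rw [add_mul, t1, t2]
      have e5 : m + 2 = j + d + 2 := by omega
      have e6 : 2*m + 1 - j + 1 = j + 2*d + 2 := by omega
      rw [e5, e6]
      ring


lemma card_avS_catalan (m : ℕ) (hm : 1 ≤ m) : (avS m).card = catalan m := by
  have h0 : (avS m).card = HF m 1 := by rw [← HF_zero_eq, HF_zero_one m hm]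
  have hcf := HF_closed m (m-1) 1 (by omega) (by omega)
  have key : (avS m).card * (m.factorial * (m+1).factorial) = (2*m).factorial := by
    obtain ⟨m', rfl⟩ : ∃ m', m = m' + 1 := ⟨m-1, by omega⟩
    have e1 : m' + 1 - 1 = m' := by omega
    have e2 : 2 * (m'+1) - 1 = 2*m' + 1 := by omega
    rw [e1, e2] at hcf
    rw [h0]
    calc HF (m'+1) 1 * ((m'+1).factorial * (m'+1+1).factorial)
        = (m'+1) * (HF (m'+1) 1 * (m'.factorial * (m'+1+1).factorial)) := by
          rw [Nat.factorial_succ m']; ring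
      _ = (m'+1) * ((1+1) * (2*m'+1).factorial) := by rw [hcf]
      _ = (2*(m'+1)).factorial := by
          rw [show 2*(m'+1) = (2*m'+1)+1 by omega, Nat.factorial_succ (2*m'+1)]
          ring
  have key2 : catalan m * (m.factorial * (m+1).factorial) = (2*m).factorial := by
    have h1 : (m+1) * catalan m = (2*m).choose m := succ_mul_catalan_eq_centralBinom m
    have h2 : (2*m).choose m * m.factorial * (2*m - m).factorial = (2*m).factorial :=
      Nat.choose_mul_factorial_mul_factorial (by omega)
    have e : 2*m - m = m := by omega
    rw [e] at h2
    calc catalan m * (m.factorial * (m+1).factorial)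
        = ((m+1) * catalan m) * m.factorial * m.factorial := by
          rw [Nat.factorial_succ m]; ring
      _ = (2*m).choose m * m.factorial * m.factorial := by rw [h1]
      _ = (2*m).factorial := h2
  have hpos : 0 < m.factorial * (m+1).factorial :=
    Nat.mul_pos m.factorial_pos (m+1).factorial_pos
  exact Nat.eq_of_mul_eq_mul_right hpos (key.trans key2.symm)


def apredB : List ℕ → Bool
  | a :: b :: c :: _ => decide (a < b ∧ c < a)
  | _ => false

def delSecond : List ℕ → List ℕ
  | a :: _ :: t => a :: t
  | l => l

def insSecond (v : ℕ) : List ℕ → List ℕ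
  | a :: t => a :: v :: t
  | [] => [v]

lemma max_second {n : ℕ} {l : List ℕ} (hn : 3 ≤ n) (hl : l ∈ avS n)
    (hp : apredB l = true) : ∃ a c t, l = a :: n :: c :: t ∧ a < n ∧ c < a := by
  obtain ⟨a, b, c, t, rfl⟩ : ∃ a b c t, l = a :: b :: c :: t := by
    match l, hp with
    | a :: b :: c :: t, _ => exact ⟨a, b, c, t, rfl⟩
    | [], hp => simp [apredB] at hp
    | [a], hp => simp [apredB] at hp
    | [a, b], hp => simp [apredB] at hp
  simp only [apredB, decide_eq_true_eq] at hp
  obtain ⟨hab, hca⟩ := hp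
  have hnd := nodup_avS hl
  have hbnot : b ∉ c :: t := by
    simp only [List.nodup_cons] at hnd
    exact hnd.2.1
  have hball : ∀ z ∈ c :: t, z < b := by
    intro z hz
    by_contra hzz
    have hbz : b < z := by
      rcases Nat.lt_or_ge b z with h | h
      · exact h
      · have : z = b := by omega
        exact absurd (this ▸ hz) hbnot
    have hsub : [a, b, z].Sublist (a :: b :: c :: t) := by
      have h1 : [z].Sublist (c :: t) := List.singleton_sublist.2 hz
      have := List.Sublist.append_left h1 [a, b]
      simpa using this
    exact noInc3_not _ (mem_avS.1 hl).2 hsub hab hbz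
  have hbn : b ≤ n := (bound_avS hl (by simp)).2
  have hnmem : n ∈ a :: b :: c :: t :=
    (mem_avS.1 hl).1.mem_iff.2 (by rw [List.mem_range'_1]; omega)
  have hbeq : b = n := by
    rcases (by simpa using hnmem : n = a ∨ n = b ∨ n ∈ c :: t) with h | h | h
    · omega
    · omega
    · have := hball n h; omega
  subst hbeq
  exact ⟨a, c, t, rfl, by omega, hca⟩

lemma hpr_range {n : ℕ} (hn : 1 ≤ n) :
    (List.range' 1 n).Perm (n :: List.range' 1 (n-1)) := by
  have := perm_range_succ (n-1)
  rw [show n - 1 + 1 = n by omega] at this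
  exact this

lemma card_Aset (n : ℕ) (hn : 3 ≤ n) :
    ((avS n).filter (fun l => apredB l = true)).card
      = ((avS (n-1)).filter (fun l => 2 ≤ dpl l)).card := by
  classical
  apply Finset.card_bij' (i := fun l _ => delSecond l) (j := fun σ _ => insSecond n σ)
  · -- forward membership
    intro l hl'
    rw [Finset.mem_filter] at hl'
    obtain ⟨hl, hp⟩ := hl'
    obtain ⟨a, c, t, rfl, han, hca⟩ := max_second hn hl hp
    have hperm := (mem_avS.1 hl).1
    have hno := (mem_avS.1 hl).2
    have hmid : (a :: n :: c :: t).Perm (n :: (a :: c :: t)) := by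
      have := List.perm_middle (a := n) (l₁ := [a]) (l₂ := c :: t)
      simpa using this
    have hperm' : (a :: c :: t).Perm (List.range' 1 (n-1)) :=
      ((hmid.symm.trans hperm).trans (hpr_range (by omega))).cons_inv
    have hsub : (a :: c :: t).Sublist (a :: n :: c :: t) :=
      List.Sublist.cons₂ a (List.sublist_cons_self n (c :: t))
    rw [Finset.mem_filter]
    refine ⟨mem_avS.2 ⟨hperm', noInc3_sublist hno hsub⟩, ?_⟩
    show 2 ≤ dpl (a :: c :: t)
    refine (le_dpl_iff _ 2).2 ⟨?_, ?_⟩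
    · simp [List.Chain', List.isChain_cons_cons]
      try omega
    · have := hperm'.length_eq
      simp at this ⊢
      try omega
  · -- backward membership
    intro σ hσ
    rw [Finset.mem_filter] at hσ
    obtain ⟨hav, hd⟩ := hσ
    have hlen : σ.length = n - 1 := length_avS hav
    obtain ⟨a, c, t, rfl⟩ : ∃ a c t, σ = a :: c :: t := by
      match σ, hlen with
      | a :: c :: t, _ => exact ⟨a, c, t, rfl⟩
      | [], hlen => simp at hlen; omega
      | [a], hlen => simp at hlen; omega
    have hca : c < a := by
      have := ((le_dpl_iff _ 2).1 hd).1
      simp [List.Chain', List.isChain_cons_cons] at this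
      omega
    have hperm := (mem_avS.1 hav).1
    have hno := (mem_avS.1 hav).2
    have hbσ : ∀ w ∈ a :: c :: t, w ≤ n - 1 := fun w hw => (bound_avS hav hw).2
    have hmid : (a :: n :: c :: t).Perm (n :: (a :: c :: t)) := by
      have := List.perm_middle (a := n) (l₁ := [a]) (l₂ := c :: t)
      simpa using this
    have hperm' : (a :: n :: c :: t).Perm (List.range' 1 n) :=
      (hmid.trans ((hperm.cons n).trans (hpr_range (by omega)).symm))
    have hnog : NoInc3 (a :: n :: c :: t) := by
      apply noInc3_of
      intro x y z hs hxy hyz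
      have hbg : ∀ w ∈ a :: n :: c :: t, w ≤ n := by
        intro w hw
        have := hperm'.subset hw
        rw [List.mem_range'_1] at this
        omega
      by_cases hmem : n ∈ [x, y, z]
      · have hy3 : y ≤ n := hbg y (hs.subset (by simp))
        have hz3 : z ≤ n := hbg z (hs.subset (by simp))
        rcases (by simpa using hmem : n = x ∨ n = y ∨ n = z) with h | h | h
        · omega
        · omega
        · subst h
          have hs' : [x, y, n].Sublist ([a] ++ n :: (c :: t)) := by simpa using hs
          obtain ⟨t₁, t₂, he, h1, h2⟩ := List.sublist_append_iff.1 hs'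
          have hnct : n ∉ c :: t := fun hc' => by
            have := hbσ n (List.mem_cons_of_mem a hc'); omega
          rcases List.sublist_cons_iff.1 h2 with h2' | ⟨r, hr, hr'⟩
          · have : n ∈ t₁ ++ t₂ := by rw [← he]; simp
            rcases List.mem_append.1 this with h' | h'
            · have : n ∈ [a] := h1.subset h'
              simp at this
              have := hbσ a (by simp)
              omega
            · exact hnct (h2'.subset h')
          · subst hr
            match t₁, he with
            | [], he =>
              have hx' : x = n := by simpa using congrArg List.head? he
              omega
            | [w], he =>
              simp only [List.cons_append, List.nil_append, List.cons.injEq] at he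
              obtain ⟨-, hy', -⟩ := he
              omega
            | [w₁, w₂], he =>
              have := h1.length_le
              simp at this
            | w₁ :: w₂ :: w₃ :: t', he =>
              have := congrArg List.length he
              simp at this
      · refine noInc3_not _ hno ?_ hxy hyz
        have hs' : [x, y, z].Sublist ([a] ++ n :: (c :: t)) := by simpa using hs
        have := sublist_remove_middle hs' hmem
        simpa using this
    rw [Finset.mem_filter]
    refine ⟨mem_avS.2 ⟨hperm', hnog⟩, ?_⟩
    have han : a ≤ n - 1 := hbσ a (by simp)
    show apredB (insSecond n (a :: c :: t)) = true
    simp [insSecond, apredB]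
    omega
  · -- left inverse
    intro l hl'
    rw [Finset.mem_filter] at hl'
    obtain ⟨hl, hp⟩ := hl'
    obtain ⟨a, c, t, rfl, -, -⟩ := max_second hn hl hp
    rfl
  · -- right inverse
    intro σ hσ
    rw [Finset.mem_filter] at hσ
    obtain ⟨hav, -⟩ := hσ
    have hlen : σ.length = n - 1 := length_avS hav
    match σ, hlen with
    | a :: c :: t, _ => rfl
    | [], hlen => simp at hlen; omega
    | [a], hlen => simp at hlen; omega


lemma coreA {n : ℕ} {l : List ℕ} (hn : 3 ≤ n) (hl : l ∈ avS n) {k : ℕ} {s : List ℕ}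
    (hg : IsGenSub l k s) (hch : s.Chain' (· < ·)) (hlen : 2 ≤ s.length) :
    apredB l = true := by
  obtain ⟨hinf, hks, hall, hmax⟩ := hg
  have hno := (mem_avS.1 hl).2
  have hlen2 : s.length = 2 := by
    by_contra hc
    have h3 : 3 ≤ s.length := by omega
    obtain ⟨x, y, z, r, rfl⟩ : ∃ x y z r, s = x :: y :: z :: r := by
      match s, h3 with
      | x :: y :: z :: r, _ => exact ⟨x, y, z, r, rfl⟩
    have hsub : [x, y, z].Sublist (x :: y :: z :: r) :=
      (List.nil_sublist r).cons₂ z |>.cons₂ y |>.cons₂ x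
    have hxy : x < y := (List.isChain_cons_cons.1 hch).1
    have hyz : y < z := (List.isChain_cons_cons.1 (List.isChain_cons_cons.1 hch).2).1
    exact noInc3_not _ hno (hsub.trans hinf.sublist) hxy hyz
  obtain ⟨x, y, rfl⟩ : ∃ x y, s = [x, y] := by
    match s, hlen2 with
    | [x, y], _ => exact ⟨x, y, rfl⟩
  have hxy : x < y := by
    have := (List.isChain_cons_cons.1 hch).1
    exact this
  have hkx : k = x := by
    rcases (by simpa using hks : k = x ∨ k = y) with h | h
    · exact h
    · have := hall x (by simp)
      omega
  subst hkx
  obtain ⟨u, v, hluv⟩ := hinf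
  have hu : u = [] := by
    rcases List.eq_nil_or_concat u with h | ⟨u', w, rfl⟩
    · exact h
    · exfalso
      by_cases hw : k ≤ w
      · have hinf' : (w :: [k, y]) <:+: l := ⟨u', v, by rw [← hluv]; simp⟩
        have := hmax (w :: [k, y]) hinf' (by simp) (by
          intro z hz
          rcases (by simpa using hz : z = w ∨ z = k ∨ z = y) with h | h | h
          · omega
          · omega
          · omega)
        simp at this
      · push_neg at hw
        have hsub : [w, k, y].Sublist l := by
          have hinf' : ([w, k, y]) <:+: l := ⟨u', v, by rw [← hluv]; simp⟩
          exact hinf'.sublist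
        exact noInc3_not _ hno hsub hw hxy
  subst hu
  simp only [List.nil_append] at hluv
  have hlenl : l.length = n := length_avS hl
  obtain ⟨c, t, hv⟩ : ∃ c t, v = c :: t := by
    match v, hluv with
    | c :: t, _ => exact ⟨c, t, rfl⟩
    | [], hluv =>
      exfalso
      rw [← hluv] at hlenl
      simp at hlenl
      omega
  subst hv
  have hc : c < k := by
    by_contra hcc
    push_neg at hcc
    have hinf' : ([k, y, c]) <:+: l := ⟨[], t, by rw [← hluv]; simp⟩
    have := hmax [k, y, c] hinf' (by simp) (by
      intro z hz
      rcases (by simpa using hz : z = k ∨ z = y ∨ z = c) with h | h | h <;> omega)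
    simp at this
  rw [← hluv]
  show apredB (k :: y :: c :: t) = true
  simp [apredB]
  omega

lemma genA {n : ℕ} {l : List ℕ} (hn : 3 ≤ n) (hl : l ∈ avS n) (hp : apredB l = true) :
    ∃ k s, IsGenSub l k s ∧ s.length = 2 ∧ s.Chain' (· < ·) := by
  obtain ⟨a, b, c, t, rfl⟩ : ∃ a b c t, l = a :: b :: c :: t := by
    match l, hp with
    | a :: b :: c :: t, _ => exact ⟨a, b, c, t, rfl⟩
    | [], hp => simp [apredB] at hp
    | [a], hp => simp [apredB] at hp
    | [a, b], hp => simp [apredB] at hp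
  simp only [apredB, decide_eq_true_eq] at hp
  obtain ⟨hab, hca⟩ := hp
  have hnd := nodup_avS hl
  refine ⟨a, [a, b], ⟨⟨[], c :: t, by simp⟩, by simp, ?_, ?_⟩, by simp, ?_⟩
  · intro x hx
    rcases (by simpa using hx : x = a ∨ x = b) with h | h <;> omega
  · intro t' hinf hmem hge
    obtain ⟨u, v, huv⟩ := hinf
    have hu : u = [] := by
      rcases List.eq_nil_or_concat u with h | ⟨u', w, rfl⟩
      · exact h
      · exfalso
        rw [List.concat_eq_append] at huv
        have heq : (u' ++ [w]) ++ (t' ++ v) = a :: b :: c :: t := by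
          rw [← huv]; simp
        obtain ⟨q, q', hq⟩ := List.exists_cons_of_ne_nil (show u' ++ [w] ≠ [] by simp)
        have hqa : q = a := by
          rw [hq] at heq
          simpa using congrArg List.head? heq
        have hau : a ∈ u' ++ [w] := by rw [hq, hqa]; simp
        have hnd' : ((u' ++ [w]) ++ (t' ++ v)).Nodup := by rw [heq]; exact hnd
        rw [List.nodup_append] at hnd'
        exact hnd'.2.2 _ hau _ (List.mem_append.2 (Or.inl hmem)) rfl
    subst hu
    simp only [List.nil_append] at huv
    by_contra hgt
    push_neg at hgt
    have h3 : 3 ≤ t'.length := by simp at hgt; omega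
    obtain ⟨a', b', c', r, rfl⟩ : ∃ a' b' c' r, t' = a' :: b' :: c' :: r := by
      match t', h3 with
      | a' :: b' :: c' :: r, _ => exact ⟨a', b', c', r, rfl⟩
    simp only [List.cons_append, List.cons.injEq] at huv
    obtain ⟨rfl, rfl, rfl, -⟩ := huv
    have := hge c' (by simp)
    omega
  · simp [List.Chain', List.isChain_cons_cons]
    omega


lemma iffA {n : ℕ} (hn : 3 ≤ n) (l : List ℕ) :
    (IsPermList n l ∧ AvoidsPat [1, 2, 3] l ∧
        ∃ k s, IsGenSub l k s ∧ s.length = 2 ∧ s.Chain' (· < ·))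
      ↔ l ∈ (avS n).filter (fun l => apredB l = true) := by
  rw [Finset.mem_filter]
  constructor
  · rintro ⟨hperm, hav, hex⟩
    have hl : l ∈ avS n := mem_avS.2 ⟨hperm, (avoids_iff l).1 hav⟩
    obtain ⟨k, s, hg, hlen, hch⟩ := hex
    exact ⟨hl, coreA hn hl hg hch (by omega)⟩
  · rintro ⟨hl, hp⟩
    exact ⟨(mem_avS.1 hl).1, (avoids_iff l).2 (mem_avS.1 hl).2, genA hn hl hp⟩

lemma iffB {n : ℕ} (hn : 3 ≤ n) (l : List ℕ) :
    (IsPermList n l ∧ AvoidsPat [1, 2, 3] l ∧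
        ∀ k s, IsGenSub l k s → s.Chain' (· < ·) → s.length ≤ 1)
      ↔ l ∈ (avS n).filter (fun l => ¬ apredB l = true) := by
  rw [Finset.mem_filter]
  constructor
  · rintro ⟨hperm, hav, hall⟩
    have hl : l ∈ avS n := mem_avS.2 ⟨hperm, (avoids_iff l).1 hav⟩
    refine ⟨hl, fun hp => ?_⟩
    obtain ⟨k, s, hg, hlen, hch⟩ := genA hn hl hp
    have := hall k s hg hch
    omega
  · rintro ⟨hl, hp⟩
    refine ⟨(mem_avS.1 hl).1, (avoids_iff l).2 (mem_avS.1 hl).2, fun k s hg hch => ?_⟩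
    by_contra hc
    exact hp (coreA hn hl hg hch (by omega))

/-- For `n ≥ 3`, the number of permutations in `Av_n(123)` containing an
increasing sub-permutation of size `2` is `a_n = 3(2n−4)!/((n−3)! n!)`
(stated multiplicatively), and the number whose largest increasing
sub-permutation has size `1` is `c_n − a_n`. -/
theorem av123_increasing_subperm_counts (n : ℕ) (hn : 3 ≤ n) :
    (Nat.card {l : List ℕ // IsPermList n l ∧ AvoidsPat [1, 2, 3] l ∧
          ∃ k s, IsGenSub l k s ∧ s.length = 2 ∧ s.Chain' (· < ·)}) *
        ((n - 3).factorial * n.factorial) = 3 * (2 * n - 4).factorial ∧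
    Nat.card {l : List ℕ // IsPermList n l ∧ AvoidsPat [1, 2, 3] l ∧
          ∀ k s, IsGenSub l k s → s.Chain' (· < ·) → s.length ≤ 1} =
      catalan n -
        Nat.card {l : List ℕ // IsPermList n l ∧ AvoidsPat [1, 2, 3] l ∧
          ∃ k s, IsGenSub l k s ∧ s.length = 2 ∧ s.Chain' (· < ·)} := by
  classical
  have hA : Nat.card {l : List ℕ // IsPermList n l ∧ AvoidsPat [1, 2, 3] l ∧
        ∃ k s, IsGenSub l k s ∧ s.length = 2 ∧ s.Chain' (· < ·)}
      = ((avS n).filter (fun l => apredB l = true)).card := by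
    rw [← Nat.card_eq_finsetCard]
    exact Nat.card_congr (Equiv.subtypeEquivRight (iffA hn))
  have hB : Nat.card {l : List ℕ // IsPermList n l ∧ AvoidsPat [1, 2, 3] l ∧
        ∀ k s, IsGenSub l k s → s.Chain' (· < ·) → s.length ≤ 1}
      = ((avS n).filter (fun l => ¬ apredB l = true)).card := by
    rw [← Nat.card_eq_finsetCard]
    exact Nat.card_congr (Equiv.subtypeEquivRight (iffB hn))
  constructor
  · rw [hA, card_Aset n hn]
    have hcf := HF_closed (n-1) (n-3) 2 (by omega) (by omega)
    have e1 : n - 1 - 2 = n - 3 := by omega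
    have e2 : n - 1 + 1 = n := by omega
    have e3 : 2 * (n-1) - 2 = 2 * n - 4 := by omega
    rw [e1, e2, e3] at hcf
    have he : ((avS (n-1)).filter (fun l => 2 ≤ dpl l)).card = HF (n-1) 2 := rfl
    rw [he, hcf]
  · rw [hA, hB]
    have hsum := Finset.card_filter_add_card_filter_not
      (s := avS n) (p := fun l => apredB l = true)
    have hc := card_avS_catalan n (by omega)
    omega
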